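/- Let $L$ be a cyclic quadratic lattice of rank $n+1$ and order $l \ge 1$ over $\mathcal{O}_F$ ($F$ a $p$-adic field, $p$ odd). If $L^\sharp$ and $L^{\sharp\prime}$ are two self-dual quadratic lattices of rank $n+2$ each admitting a primitive isometric embedding of $L$, then $L^\sharp$ and $L^{\sharp\prime}$ are isometric. (Uniqueness of the self-dual overlattice of corank one.) -/

import Mathlib

open scoped BigOperators
noncomputable section

namespace Paper2

variable {O : Type*} [CommRing O] [IsDomain O] [IsDiscreteValuationRing O]


theorem hensel_sq [IsAdicComplete (IsLocalRing.maximalIdeal O) O] [Invertible (2 : O)]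
    (ϖ : O) (hϖ : Irreducible ϖ) (l : ℕ) (hl : 1 ≤ l) (τ : O) :
    ∃ δ : O, (1 + ϖ ^ l * δ) * (1 + ϖ ^ l * δ) = 1 + ϖ ^ l * τ := by
  classical
  have h2 : IsUnit (2 : O) := isUnit_of_invertible 2
  have hϖm : ∀ d : O, ϖ ^ l * d ∈ IsLocalRing.maximalIdeal O := by
    intro d
    rw [IsLocalRing.mem_maximalIdeal, mem_nonunits_iff]
    intro h
    exact hϖ.not_isUnit (isUnit_of_dvd_unit
      (dvd_mul_of_dvd_left (dvd_pow_self ϖ (by omega)) d) h)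
  set f : Polynomial O := Polynomial.X ^ 2 + (Polynomial.C 2 * Polynomial.X
    + Polynomial.C (-(ϖ ^ l * τ))) with hf
  have hmonic : f.Monic := by
    apply Polynomial.monic_X_pow_add
    have h1 : (Polynomial.C (2:O) * Polynomial.X
        + Polynomial.C (-(ϖ ^ l * τ))).degree ≤ 1 := by
      refine le_trans (Polynomial.degree_add_le _ _) ?_
      simp only [sup_le_iff]
      exact ⟨Polynomial.degree_C_mul_X_le _, le_trans Polynomial.degree_C_le (by norm_num)⟩
    exact lt_of_le_of_lt h1 (by norm_num)
  have heval : f.eval 0 ∈ IsLocalRing.maximalIdeal O := by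
    have : f.eval 0 = -(ϖ ^ l * τ) := by simp [hf]
    rw [this]
    exact neg_mem (hϖm τ)
  have hderiv : IsUnit (Ideal.Quotient.mk (IsLocalRing.maximalIdeal O)
      (f.derivative.eval 0)) := by
    have : f.derivative.eval 0 = 2 := by
      rw [hf]
      simp only [Polynomial.derivative_add, Polynomial.derivative_X_pow,
        Polynomial.derivative_C_mul, Polynomial.derivative_X, Polynomial.derivative_C]
      simp
    rw [this]
    exact h2.map _
  obtain ⟨a, hroot, hamem⟩ :=
    HenselianRing.is_henselian (I := IsLocalRing.maximalIdeal O) f hmonic 0 heval hderiv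
  have hrt : a * (a + 2) = ϖ ^ l * τ := by
    have := hroot
    simp only [Polynomial.IsRoot, hf, Polynomial.eval_add, Polynomial.eval_pow,
      Polynomial.eval_X, Polynomial.eval_mul, Polynomial.eval_C] at this
    ring_nf
    ring_nf at this
    linear_combination this
  have ham : a ∈ IsLocalRing.maximalIdeal O := by simpa using hamem
  have hunit : IsUnit (a + 2) := by
    by_contra h
    have : a + 2 ∈ IsLocalRing.maximalIdeal O := by
      rw [IsLocalRing.mem_maximalIdeal, mem_nonunits_iff]; exact h
    have h2m : (2 : O) ∈ IsLocalRing.maximalIdeal O := by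
      have := sub_mem this ham
      simpa using this
    rw [IsLocalRing.mem_maximalIdeal, mem_nonunits_iff] at h2m
    exact h2m h2
  obtain ⟨V, hV⟩ := hunit
  refine ⟨τ * ↑V⁻¹, ?_⟩
  have ha : ϖ ^ l * (τ * ↑V⁻¹) = a := by
    have : ϖ ^ l * τ * ↑V⁻¹ = a * (a + 2) * ↑V⁻¹ := by rw [hrt]
    calc ϖ ^ l * (τ * ↑V⁻¹) = ϖ ^ l * τ * ↑V⁻¹ := by ring
    _ = a * (a + 2) * ↑V⁻¹ := by rw [hrt]
    _ = a * (↑V * ↑V⁻¹) := by rw [hV]; ring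
    _ = a := by rw [Units.mul_inv]; ring
  rw [ha]
  linear_combination hrt

theorem transform [Invertible (2 : O)]
    {L : Type*} [AddCommGroup L] [Module O L]
    (QL : QuadraticForm O L)
    (hLnd : Function.Injective ⇑(QuadraticMap.associated (R := O) QL))
    (ϖ : O) (l : ℕ)
    (φ : Module.Dual O L) (c : O) (z : L)
    (hz : QuadraticMap.associated (R := O) QL z = ϖ ^ l • φ)
    (u : O) (ν : L) (z' : L)
    (hz' : QuadraticMap.associated (R := O) QL z'
      = ϖ ^ l • (u • φ + QuadraticMap.associated (R := O) QL ν)) :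
    ϖ ^ l * (u * u * c + (u * φ ν + u * φ ν) + QL ν)
      - (u • φ + QuadraticMap.associated (R := O) QL ν) z'
      = u * u * (ϖ ^ l * c - φ z) := by
  set A := QuadraticMap.associated (R := O) QL with hA
  have hz'' : z' = u • z + (ϖ ^ l) • ν := by
    apply hLnd
    rw [map_add, map_smul, map_smul, hz, hz']
    ext y
    simp only [LinearMap.add_apply, LinearMap.smul_apply, smul_eq_mul]
    ring
  have hsymm : ∀ a b : L, A a b = A b a := fun a b =>
    (QuadraticMap.associated_isSymm O QL a b)
  have hself : A ν ν = QL ν := QuadraticMap.associated_eq_self_apply O QL ν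
  have hAνz : A ν z = ϖ ^ l * φ ν := by
    rw [hsymm ν z, hz]; simp
  rw [hz'']
  simp only [LinearMap.add_apply, LinearMap.smul_apply, map_add, map_smul, smul_eq_mul]
  rw [hAνz, hself]
  have hφz : φ z = φ z := rfl
  ring
/-- Decomposition of a primitive corank-one extension. -/
theorem exists_decomp
    {L M : Type*}
    [AddCommGroup L] [Module O L] [Module.Free O L] [Module.Finite O L]
    [AddCommGroup M] [Module O M] [Module.Free O M] [Module.Finite O M]
    (hrk : Module.finrank O M = Module.finrank O L + 1)
    (ι : L →ₗ[O] M) (π : M →ₗ[O] L) (hπ : π.comp ι = LinearMap.id) :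
    ∃ (x : M) (E : (L × O) ≃ₗ[O] M), ∀ p : L × O, E p = ι p.1 + p.2 • x := by
  have hπι : ∀ y, π (ι y) = y := fun y => congrArg (· y) hπ
  set K := LinearMap.ker π with hK
  have hmem : ∀ z : M, z - ι (π z) ∈ K := by
    intro z; simp [hK, LinearMap.mem_ker, hπι]
  haveI : Module.Finite O K := by
    rw [Module.Finite.iff_fg]
    exact IsNoetherian.noetherian K
  -- K is free over the PID O
  haveI : Module.Free O K := Module.free_of_finite_type_torsion_free'
  -- the split exact sequence gives an equivalence M ≃ L × K
  let f : M →ₗ[O] L × K :=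
    π.prod ((LinearMap.id - ι.comp π).codRestrict K (fun z => hmem z))
  let g : L × K →ₗ[O] M :=
    ι.comp (LinearMap.fst O L K) + K.subtype.comp (LinearMap.snd O L K)
  have hfg : ∀ p, f (g p) = p := by
    rintro ⟨y, k, hk⟩
    have hπk : π k = 0 := hk
    ext
    · simp [f, g, hπk, hπι]
    · simp [f, g, LinearMap.codRestrict, hπk, hπι]
  have hgf : ∀ z, g (f z) = z := by
    intro z
    simp [f, g, LinearMap.codRestrict]
  let e0 : M ≃ₗ[O] L × K :=
    { toFun := f, map_add' := f.map_add, map_smul' := f.map_smul,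
      invFun := g, left_inv := hgf, right_inv := hfg }
  -- K has rank 1
  have hrkK : Module.finrank O K = 1 := by
    have := e0.finrank_eq
    rw [Module.finrank_prod] at this
    omega
  -- a generator of K
  let b : Module.Basis (Fin 1) O K := (Module.Free.chooseBasis O K).reindex
    (Fintype.equivFinOfCardEq (by
      rw [← Module.finrank_eq_card_chooseBasisIndex, hrkK]))
  have hgen : ∀ k : K, k = (b.repr k 0) • b 0 := by
    intro k
    conv_lhs => rw [← b.sum_repr k]
    simp
  refine ⟨(b 0 : M), ?_, ?_⟩
  · refine LinearEquiv.ofBijective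
      (ι.comp (LinearMap.fst O L O) +
        (LinearMap.toSpanSingleton O M (b 0 : M)).comp (LinearMap.snd O L O)) ⟨?_, ?_⟩
    · rintro ⟨y, t⟩ ⟨y', t'⟩ hp
      simp only [LinearMap.add_apply, LinearMap.comp_apply, LinearMap.fst_apply,
        LinearMap.snd_apply, LinearMap.toSpanSingleton_apply] at hp
      have hb0 : π (b 0 : M) = 0 := (b 0).2
      have hy : y = y' := by
        have := congrArg π hp
        simpa [map_add, hπι, hb0] using this
      have ht : t • (b 0 : M) = t' • (b 0 : M) := by
        rw [hy] at hp
        exact add_left_cancel hp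
      have hbne : (b 0 : M) ≠ 0 := by
        have := b.ne_zero 0
        simpa [Submodule.coe_eq_zero] using fun h => this (Subtype.ext h)
      have : t = t' := by
        have hsub : (t - t') • (b 0 : M) = 0 := by
          rw [sub_smul, ht, sub_self]
        rcases smul_eq_zero.mp hsub with h | h
        · exact sub_eq_zero.mp h
        · exact absurd h hbne
      exact Prod.ext hy this
    · intro z
      refine ⟨(π z, b.repr ⟨z - ι (π z), hmem z⟩ 0), ?_⟩
      have := hgen ⟨z - ι (π z), hmem z⟩
      have hco : z - ι (π z) = (b.repr ⟨z - ι (π z), hmem z⟩ 0) • (b 0 : M) := by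
        have h2 := congrArg (Subtype.val) this
        simpa using h2
      simp only [LinearMap.add_apply, LinearMap.comp_apply, LinearMap.fst_apply,
        LinearMap.snd_apply, LinearMap.toSpanSingleton_apply]
      rw [← hco]; abel
  · intro p
    simp [LinearEquiv.ofBijective, LinearMap.toSpanSingleton_apply]

theorem side_facts [Invertible (2 : O)]
    {L M : Type*} [AddCommGroup L] [Module O L] [AddCommGroup M] [Module O M]
    (ϖ : O) (hϖ : Irreducible ϖ) (l : ℕ) (hl : 1 ≤ l)
    (QL : QuadraticForm O L) (Q : QuadraticForm O M)
    (hLnd : Function.Injective ⇑(QuadraticMap.associated (R := O) QL))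
    (e : (Module.Dual O L ⧸ LinearMap.range (QuadraticMap.associated (R := O) QL))
        ≃ₗ[O] (O ⧸ Ideal.span {ϖ ^ l}))
    (hsd : Function.Bijective ⇑(QuadraticMap.associated (R := O) Q))
    (ι : L →ₗ[O] M) (hι : ∀ y : L, Q (ι y) = QL y)
    (π : M →ₗ[O] L) (hπ : π.comp ι = LinearMap.id)
    (x : M) (E : (L × O) ≃ₗ[O] M) (hE : ∀ p : L × O, E p = ι p.1 + p.2 • x) :
    (∀ (y : L) (t : O), Q (ι y + t • x)
        = QL y + (t * ((QuadraticMap.associated (R := O) Q x).comp ι) y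
            + t * ((QuadraticMap.associated (R := O) Q x).comp ι) y) + t * t * Q x)
    ∧ (∀ μ : Module.Dual O L, ∃ (t : O) (y : L),
        μ = t • ((QuadraticMap.associated (R := O) Q x).comp ι)
          + QuadraticMap.associated (R := O) QL y)
    ∧ (∀ r : O, r • ((QuadraticMap.associated (R := O) Q x).comp ι)
          ∈ LinearMap.range (QuadraticMap.associated (R := O) QL) → ϖ ^ l ∣ r)
    ∧ (∀ z : L, QuadraticMap.associated (R := O) QL z
          = ϖ ^ l • ((QuadraticMap.associated (R := O) Q x).comp ι)
        → IsUnit (ϖ ^ l * Q x - ((QuadraticMap.associated (R := O) Q x).comp ι) z)) := by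
  have hπι : ∀ y, π (ι y) = y := fun y => congrArg (· y) hπ
  set A := QuadraticMap.associated (R := O) QL with hA
  set B := QuadraticMap.associated (R := O) Q with hB
  set φ : Module.Dual O L := (B x).comp ι with hφ
  set c : O := Q x with hc
  have hBsymm : ∀ a b : M, B a b = B b a := fun a b =>
    (QuadraticMap.associated_isSymm O Q a b)
  have hAsymm : ∀ a b : L, A a b = A b a := fun a b =>
    (QuadraticMap.associated_isSymm O QL a b)
  have hBself : ∀ a : M, B a a = Q a := fun a =>
    QuadraticMap.associated_eq_self_apply O Q a
  have hpolar : ∀ a b : M, QuadraticMap.polar Q a b = B a b + B a b := by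
    intro a b
    have h := QuadraticMap.two_nsmul_associated O Q
    have h2 := congrArg (fun (B' : LinearMap.BilinMap O M O) => B' a b) h
    simp only [LinearMap.smul_apply, two_smul, LinearMap.add_apply,
      QuadraticMap.polarBilin_apply_apply] at h2
    exact h2.symm
  have hcmp : ∀ y y' : L, B (ι y) (ι y') = A y y' := by
    intro y y'
    have hQL : QL = Q.comp ι := by
      ext y; simp only [QuadraticMap.comp_apply]; exact (hι y).symm
    rw [hA, hQL, QuadraticMap.associated_comp]
    simp only [LinearMap.compl₁₂_apply]
    rfl
  -- the value formula
  have hval : ∀ (y : L) (t : O), Q (ι y + t • x)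
      = QL y + (t * φ y + t * φ y) + t * t * c := by
    intro y t
    have h1 := QuadraticMap.map_add (⇑Q) (ι y) (t • x)
    have h2 : Q (t • x) = t * t * c := by
      rw [QuadraticMap.map_smul, smul_eq_mul, ← hc]
    have h3 : QuadraticMap.polar (⇑Q) (ι y) (t • x) = t * (φ y + φ y) := by
      rw [QuadraticMap.polar_smul_right, hpolar, hBsymm (ι y) x]
      have hxy : B x (ι y) = φ y := rfl
      rw [hxy]
      try rw [smul_eq_mul]
    rw [h1, h2, h3, hι]
    ring
  -- generation
  have hgen : ∀ μ : Module.Dual O L, ∃ (t : O) (y : L), μ = t • φ + A y := by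
    intro μ
    obtain ⟨z, hz⟩ := hsd.2 (μ.comp π)
    set p := E.symm z with hp
    have hzp : ι p.1 + p.2 • x = z := by rw [← hE p, hp, E.apply_symm_apply]
    refine ⟨p.2, p.1, ?_⟩
    ext y'
    have h1 : ((B z).comp ι) y' = μ y' := by
      simp only [LinearMap.comp_apply]
      rw [hz]
      simp only [LinearMap.comp_apply, hπι]
    rw [← h1, ← hzp]
    simp only [LinearMap.comp_apply, map_add, map_smul, LinearMap.add_apply,
      LinearMap.smul_apply, smul_eq_mul]
    rw [hcmp]
    have hxy : φ y' = B x (ι y') := rfl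
    rw [hxy]
    ring
  -- annihilator bound
  have hann : ∀ r : O, r • φ ∈ LinearMap.range A → ϖ ^ l ∣ r := by
    intro r hr
    obtain ⟨ξ, hξ⟩ := Submodule.Quotient.mk_surjective _ (e.symm (Ideal.Quotient.mk _ (1 : O)))
    obtain ⟨s, ys, hs⟩ := hgen ξ
    obtain ⟨y'', hy''⟩ := hr
    have hrange : r • ξ ∈ LinearMap.range A := by
      rw [hs, smul_add, smul_comm r s φ, ← hy'']
      exact ⟨s • y'' + r • ys, by rw [map_add, map_smul, map_smul]⟩
    have hq0 : Submodule.Quotient.mk (p := LinearMap.range A) (r • ξ) = 0 :=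
      (Submodule.Quotient.mk_eq_zero _).mpr hrange
    have h8 : r • (e.symm (Ideal.Quotient.mk (Ideal.span {ϖ ^ l}) (1 : O))) = 0 := by
      rw [← hξ, ← Submodule.Quotient.mk_smul]
      exact hq0
    have h9 := congrArg e h8
    rw [map_smul, e.apply_symm_apply, map_zero] at h9
    have h10 : Submodule.Quotient.mk (p := (Ideal.span {ϖ ^ l} : Ideal O)) r = 0 := by
      have h11 : Ideal.Quotient.mk (Ideal.span {ϖ ^ l}) (1 : O)
          = Submodule.Quotient.mk (1 : O) := rfl
      rw [h11] at h9
      have h12 : Submodule.Quotient.mk (p := (Ideal.span {ϖ ^ l} : Ideal O)) (r • (1 : O)) = 0 := by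
        rw [Submodule.Quotient.mk_smul]
        exact h9
      rwa [smul_eq_mul, mul_one] at h12
    rw [Submodule.Quotient.mk_eq_zero] at h10
    exact (Ideal.mem_span_singleton).mp h10
  -- unit of the invariant t
  refine ⟨hval, hgen, hann, ?_⟩
  intro z hz
  -- the coordinate functional
  set lam : Module.Dual O M := (LinearMap.snd O L O).comp (E.symm : M →ₗ[O] (L × O)) with hlam
  have hlamι : ∀ y : L, lam (ι y) = 0 := by
    intro y
    have : ι y = E (y, 0) := by rw [hE]; simp
    rw [hlam]
    simp [this]
  have hlamx : lam x = 1 := by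
    have : x = E (0, 1) := by rw [hE]; simp
    rw [hlam]
    simp [this]
  obtain ⟨z', hz'⟩ := hsd.2 lam
  set p := E.symm z' with hp
  have hzp : ι p.1 + p.2 • x = z' := by rw [← hE p, hp, E.apply_symm_apply]
  -- first coordinate relation
  have hfst : A p.1 + p.2 • φ = 0 := by
    ext y
    have h1 : B z' (ι y) = 0 := by rw [hz']; exact hlamι y
    rw [← hzp] at h1
    simp only [map_add, map_smul, LinearMap.add_apply, LinearMap.smul_apply,
      smul_eq_mul, LinearMap.zero_apply] at h1 ⊢
    rw [hcmp] at h1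
    have hxy : φ y = B x (ι y) := rfl
    rw [hxy]
    exact h1
  have hmem : p.2 • φ ∈ LinearMap.range A := by
    have h2 : p.2 • φ = -(A p.1) := eq_neg_of_add_eq_zero_right hfst
    exact ⟨-p.1, by rw [map_neg, ← h2]⟩
  obtain ⟨r₀, hr₀⟩ := hann p.2 hmem
  -- p.1 = -r₀ • z
  have hp1 : p.1 = -r₀ • z := by
    apply hLnd
    rw [map_smul, hz, eq_neg_of_add_eq_zero_left hfst, hr₀]
    ext y
    simp only [LinearMap.neg_apply, LinearMap.smul_apply, smul_eq_mul]
    ring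
  -- second coordinate relation
  have hsnd : φ p.1 + p.2 * c = 1 := by
    have h1 : B z' x = 1 := by rw [hz']; exact hlamx
    rw [← hzp] at h1
    simp only [map_add, map_smul, LinearMap.add_apply, LinearMap.smul_apply,
      smul_eq_mul] at h1
    rw [hBsymm (ι p.1) x, hBself] at h1
    have hxy : φ p.1 = B x (ι p.1) := rfl
    rw [hxy, hc]
    exact h1
  refine isUnit_of_mul_isUnit_left (y := r₀) ?_
  have : (ϖ ^ l * c - φ z) * r₀ = 1 := by
    rw [hp1] at hsnd
    rw [hr₀] at hsnd
    simp only [map_neg, map_smul, neg_smul, smul_eq_mul, LinearMap.neg_apply] at hsnd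
    linear_combination hsnd
  rw [this]
  exact isUnit_one

/-- uniqueness (up to isometry) of a self-dual quadratic lattice of rank
`n + 2` admitting a primitive isometric embedding of a fixed cyclic lattice `L` of rank
`n + 1` and order `l ≥ 1`. -/
theorem statement2
    [IsAdicComplete (IsLocalRing.maximalIdeal O) O] [Invertible (2 : O)]
    (ϖ : O) (hϖ : Irreducible ϖ) (hfin : Finite (O ⧸ Ideal.span {ϖ}))
    (n l : ℕ) (hl : 1 ≤ l)
    (L L₁ L₂ : Type*)
    [AddCommGroup L] [Module O L] [Module.Free O L] [Module.Finite O L]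
    [AddCommGroup L₁] [Module O L₁] [Module.Free O L₁] [Module.Finite O L₁]
    [AddCommGroup L₂] [Module O L₂] [Module.Free O L₂] [Module.Finite O L₂]
    (QL : QuadraticForm O L) (Q₁ : QuadraticForm O L₁) (Q₂ : QuadraticForm O L₂)
    (hrkL : Module.finrank O L = n + 1)
    (hrk₁ : Module.finrank O L₁ = n + 2) (hrk₂ : Module.finrank O L₂ = n + 2)
    -- `L` is nondegenerate and cyclic of order `l` : `L^∨/L ≃ O/ϖ^l`
    (hLnd : Function.Injective ⇑(QuadraticMap.associated (R := O) QL))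
    (hcyc : Nonempty
      ((Module.Dual O L ⧸ LinearMap.range (QuadraticMap.associated (R := O) QL))
        ≃ₗ[O] (O ⧸ Ideal.span {ϖ ^ l})))
    -- `L₁` and `L₂` are self-dual
    (hsd₁ : Function.Bijective ⇑(QuadraticMap.associated (R := O) Q₁))
    (hsd₂ : Function.Bijective ⇑(QuadraticMap.associated (R := O) Q₂))
    -- primitive isometric embeddings of `L` into `L₁` and `L₂`
    (ι₁ : L →ₗ[O] L₁) (hι₁ : ∀ x : L, Q₁ (ι₁ x) = QL x)
    (hprim₁ : ∃ π : L₁ →ₗ[O] L, π.comp ι₁ = LinearMap.id)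
    (ι₂ : L →ₗ[O] L₂) (hι₂ : ∀ x : L, Q₂ (ι₂ x) = QL x)
    (hprim₂ : ∃ π : L₂ →ₗ[O] L, π.comp ι₂ = LinearMap.id) :
    Nonempty (QuadraticMap.IsometryEquiv Q₁ Q₂) := by
  obtain ⟨e⟩ := hcyc
  obtain ⟨π₁, hπ₁⟩ := hprim₁
  obtain ⟨π₂, hπ₂⟩ := hprim₂
  obtain ⟨x₁, E₁, hE₁⟩ := exists_decomp (by rw [hrk₁, hrkL]) ι₁ π₁ hπ₁
  obtain ⟨x₂, E₂, hE₂⟩ := exists_decomp (by rw [hrk₂, hrkL]) ι₂ π₂ hπ₂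
  obtain ⟨hval₁, hgen₁, hann₁, hunit₁⟩ :=
    side_facts ϖ hϖ l hl QL Q₁ hLnd e hsd₁ ι₁ hι₁ π₁ hπ₁ x₁ E₁ hE₁
  obtain ⟨hval₂, hgen₂, hann₂, hunit₂⟩ :=
    side_facts ϖ hϖ l hl QL Q₂ hLnd e hsd₂ ι₂ hι₂ π₂ hπ₂ x₂ E₂ hE₂
  set A := QuadraticMap.associated (R := O) QL with hA
  set φ₁ : Module.Dual O L := (QuadraticMap.associated (R := O) Q₁ x₁).comp ι₁ with hφ₁
  set φ₂ : Module.Dual O L := (QuadraticMap.associated (R := O) Q₂ x₂).comp ι₂ with hφ₂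
  set c₁ : O := Q₁ x₁ with hc₁def
  set c₂ : O := Q₂ x₂ with hc₂def
  have hϖl_ne : (ϖ ^ l : O) ≠ 0 := pow_ne_zero _ hϖ.ne_zero
  -- `ϖ^l` kills the cyclic quotient
  have hst : ∀ μ : Module.Dual O L, ∃ z : L, A z = ϖ ^ l • μ := by
    intro μ
    have hmem : ϖ ^ l • μ ∈ LinearMap.range A := by
      rw [← Submodule.Quotient.mk_eq_zero (LinearMap.range A)]
      apply e.injective
      rw [map_zero, Submodule.Quotient.mk_smul, map_smul]
      obtain ⟨a, ha⟩ := Ideal.Quotient.mk_surjective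
        (I := Ideal.span {ϖ ^ l}) (e (Submodule.Quotient.mk μ))
      rw [← ha]
      have h11 : Ideal.Quotient.mk (Ideal.span {ϖ ^ l}) a
          = Submodule.Quotient.mk (p := (Ideal.span {ϖ ^ l} : Ideal O)) a := rfl
      rw [h11, ← Submodule.Quotient.mk_smul, Submodule.Quotient.mk_eq_zero]
      rw [smul_eq_mul]
      exact Ideal.mem_span_singleton.mpr (dvd_mul_right _ _)
    obtain ⟨z, hz⟩ := hmem
    exact ⟨z, hz⟩
  obtain ⟨z₁, hz₁⟩ := hst φ₁
  obtain ⟨z₂, hz₂⟩ := hst φ₂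
  have hT₁ : IsUnit (ϖ ^ l * c₁ - φ₁ z₁) := hunit₁ z₁ hz₁
  have hT₂ : IsUnit (ϖ ^ l * c₂ - φ₂ z₂) := hunit₂ z₂ hz₂
  -- units of the form 1 - ϖ^l d
  have hOneSub : ∀ d : O, IsUnit (1 - ϖ ^ l * d) := by
    intro d
    apply IsLocalRing.isUnit_one_sub_self_of_mem_nonunits
    rw [mem_nonunits_iff]
    intro h
    exact hϖ.not_isUnit (isUnit_of_dvd_unit
      (dvd_mul_of_dvd_left (dvd_pow_self ϖ (by omega)) d) h)
  -- compare the two generators of the discriminant group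
  obtain ⟨w, y₁, hw⟩ := hgen₁ φ₂
  obtain ⟨w', y₁', hw'⟩ := hgen₂ φ₁
  have hww' : (1 - w * w') • φ₂ ∈ LinearMap.range A := by
    refine ⟨w • y₁' + y₁, ?_⟩
    ext y
    have e2 := congrArg (fun f : Module.Dual O L => f y) hw
    have e3 := congrArg (fun f : Module.Dual O L => f y) hw'
    simp only [LinearMap.add_apply, LinearMap.smul_apply, smul_eq_mul] at e2 e3
    simp only [map_add, map_smul, LinearMap.add_apply, LinearMap.smul_apply, smul_eq_mul]
    linear_combination -e2 - w * e3
  obtain ⟨dd, hdd⟩ := hann₂ (1 - w * w') hww'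
  have hwu : IsUnit w := by
    refine isUnit_of_mul_isUnit_left (y := w') ?_
    have : w * w' = 1 - ϖ ^ l * dd := by linear_combination -hdd
    rw [this]
    exact hOneSub dd
  -- the congruence t₂ ≡ w² t₁ mod ϖ^l
  have htrans := transform QL hLnd ϖ l φ₁ c₁ z₁ hz₁ w y₁ z₂ (by rw [← hw]; exact hz₂)
  have happ : (w • φ₁ + A y₁) z₂ = φ₂ z₂ := by rw [← hw]
  -- Hensel's lemma: adjust w to u
  obtain ⟨δ, hδ⟩ := hensel_sq ϖ hϖ l hl
    (-((c₂ - (w * w * c₁ + (w * φ₁ y₁ + w * φ₁ y₁) + QL y₁)) * ↑hT₂.unit⁻¹))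
  have hτt : (-((c₂ - (w * w * c₁ + (w * φ₁ y₁ + w * φ₁ y₁) + QL y₁)) * ↑hT₂.unit⁻¹))
      * (ϖ ^ l * c₂ - φ₂ z₂)
      = -(c₂ - (w * w * c₁ + (w * φ₁ y₁ + w * φ₁ y₁) + QL y₁)) := by
    have hinv : (↑hT₂.unit⁻¹ : O) * (ϖ ^ l * c₂ - φ₂ z₂) = 1 := hT₂.val_inv_mul
    calc (-((c₂ - (w * w * c₁ + (w * φ₁ y₁ + w * φ₁ y₁) + QL y₁)) * ↑hT₂.unit⁻¹))
        * (ϖ ^ l * c₂ - φ₂ z₂)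
        = -((c₂ - (w * w * c₁ + (w * φ₁ y₁ + w * φ₁ y₁) + QL y₁))
            * ((↑hT₂.unit⁻¹ : O) * (ϖ ^ l * c₂ - φ₂ z₂))) := by ring
      _ = -(c₂ - (w * w * c₁ + (w * φ₁ y₁ + w * φ₁ y₁) + QL y₁)) := by rw [hinv]; ring
  have hVu : IsUnit (1 + ϖ ^ l * δ) := by
    have := hOneSub (-δ)
    rw [mul_neg, sub_neg_eq_add] at this
    exact this
  set u : O := ↑hwu.unit⁻¹ * (1 + ϖ ^ l * δ) with hu
  have huw : u * w = 1 + ϖ ^ l * δ := by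
    rw [hu]
    have : (↑hwu.unit⁻¹ : O) * w = 1 := hwu.val_inv_mul
    calc ↑hwu.unit⁻¹ * (1 + ϖ ^ l * δ) * w
        = ((↑hwu.unit⁻¹ : O) * w) * (1 + ϖ ^ l * δ) := by ring
      _ = 1 + ϖ ^ l * δ := by rw [this]; ring
  have huu : IsUnit u := by
    rw [hu]
    exact (hwu.unit⁻¹.isUnit).mul hVu
  -- u² t₂ = t₁
  have hu2 : u * u * (ϖ ^ l * c₂ - φ₂ z₂) = ϖ ^ l * c₁ - φ₁ z₁ := by
    have hwne : w * w ≠ 0 := (hwu.mul hwu).ne_zero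
    apply mul_left_cancel₀ hwne
    calc w * w * (u * u * (ϖ ^ l * c₂ - φ₂ z₂))
        = (u * w) * (u * w) * (ϖ ^ l * c₂ - φ₂ z₂) := by ring
      _ = (1 + ϖ ^ l * δ) * (1 + ϖ ^ l * δ) * (ϖ ^ l * c₂ - φ₂ z₂) := by rw [huw]
      _ = w * w * (ϖ ^ l * c₁ - φ₁ z₁) := by
          rw [hδ]
          linear_combination htrans + ϖ ^ l * hτt + happ
  -- the new gluing vector data
  set y₀ : L := -δ • z₁ - u • y₁ with hy₀
  have hφ₀ : φ₁ = u • φ₂ + A y₀ := by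
    ext y
    have e2 := congrArg (fun f : Module.Dual O L => f y) hw
    have ez1 := congrArg (fun f : Module.Dual O L => f y) hz₁
    simp only [LinearMap.add_apply, LinearMap.smul_apply, smul_eq_mul] at e2 ez1
    simp only [hy₀, map_sub, map_smul, map_neg, LinearMap.add_apply, LinearMap.sub_apply,
      LinearMap.smul_apply, LinearMap.neg_apply, smul_eq_mul]
    linear_combination -u * e2 + δ * ez1 - (φ₁ y) * huw
  have htrans2 := transform QL hLnd ϖ l φ₂ c₂ z₂ hz₂ u y₀ z₁ (by rw [← hφ₀]; exact hz₁)
  have happ2 : (u • φ₂ + A y₀) z₁ = φ₁ z₁ := by rw [← hφ₀]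
  have hc₁ : c₁ = u * u * c₂ + (u * φ₂ y₀ + u * φ₂ y₀) + QL y₀ := by
    apply mul_left_cancel₀ hϖl_ne
    linear_combination -htrans2 - happ2 - hu2
  -- the isometry
  have hUinv : (↑huu.unit⁻¹ : O) * u = 1 := huu.val_inv_mul
  have hUinv' : u * (↑huu.unit⁻¹ : O) = 1 := by
    rw [mul_comm]; exact huu.val_inv_mul
  let G : (L × O) ≃ₗ[O] (L × O) :=
    { toFun := fun p => (p.1 + p.2 • y₀, u * p.2)
      map_add' := by
        intro p q
        ext
        · simp only [Prod.fst_add, Prod.snd_add, add_smul]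
          abel
        · simp only [Prod.snd_add]
          ring
      map_smul' := by
        intro r p
        ext
        · simp only [Prod.smul_fst, Prod.smul_snd, smul_smul, RingHom.id_apply, smul_add,
            smul_eq_mul]
        · simp only [Prod.smul_snd, RingHom.id_apply, smul_eq_mul]
          ring
      invFun := fun p => (p.1 - ((↑huu.unit⁻¹ : O) * p.2) • y₀, (↑huu.unit⁻¹ : O) * p.2)
      left_inv := by
        intro p
        have h1 : (↑huu.unit⁻¹ : O) * (u * p.2) = p.2 := by
          rw [← mul_assoc, hUinv, one_mul]
        ext
        · simp only [h1]
          abel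
        · simp only [h1]
      right_inv := by
        intro p
        have h1 : u * ((↑huu.unit⁻¹ : O) * p.2) = p.2 := by
          rw [← mul_assoc, hUinv', one_mul]
        ext
        · simp only [h1]
          abel
        · simp only [h1] }
  let σ : L₁ ≃ₗ[O] L₂ := (E₁.symm.trans G).trans E₂
  -- polar facts for `QL`
  have hAsymm : ∀ a b : L, A a b = A b a := fun a b =>
    (QuadraticMap.associated_isSymm O QL a b)
  have hpolarL : ∀ a b : L, QuadraticMap.polar (⇑QL) a b = A a b + A a b := by
    intro a b
    have h := QuadraticMap.two_nsmul_associated O QL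
    have h2 := congrArg (fun (B' : LinearMap.BilinMap O L O) => B' a b) h
    simp only [LinearMap.smul_apply, two_smul, LinearMap.add_apply,
      QuadraticMap.polarBilin_apply_apply] at h2
    exact h2.symm
  refine ⟨{ toLinearEquiv := σ, map_app' := ?_ }⟩
  intro m
  set p : L × O := E₁.symm m with hp
  have hm : m = ι₁ p.1 + p.2 • x₁ := by
    rw [← hE₁ p, hp, E₁.apply_symm_apply]
  have hσ : σ m = ι₂ (p.1 + p.2 • y₀) + (u * p.2) • x₂ := by
    show E₂ (G (E₁.symm m)) = _
    rw [← hp]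
    rw [show G p = (p.1 + p.2 • y₀, u * p.2) from rfl]
    exact hE₂ _
  show Q₂ (σ m) = Q₁ m
  rw [hσ]
  conv_rhs => rw [hm]
  rw [hval₂ (p.1 + p.2 • y₀) (u * p.2), hval₁ p.1 p.2]
  -- expand everything into scalars
  have hQLadd : QL (p.1 + p.2 • y₀)
      = QL p.1 + p.2 * p.2 * QL y₀ + p.2 * (A p.1 y₀ + A p.1 y₀) := by
    have h1 := QuadraticMap.map_add (⇑QL) p.1 (p.2 • y₀)
    have h2 : QL (p.2 • y₀) = p.2 * p.2 * QL y₀ := by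
      rw [QuadraticMap.map_smul, smul_eq_mul]
    have h3 : QuadraticMap.polar (⇑QL) p.1 (p.2 • y₀) = p.2 * (A p.1 y₀ + A p.1 y₀) := by
      rw [QuadraticMap.polar_smul_right, hpolarL, smul_eq_mul]
    rw [h1, h2, h3]
  have hφ₂add : φ₂ (p.1 + p.2 • y₀) = φ₂ p.1 + p.2 * φ₂ y₀ := by
    rw [map_add, map_smul, smul_eq_mul]
  have hφ₁p : φ₁ p.1 = u * φ₂ p.1 + A y₀ p.1 := by
    have := congrArg (fun f : Module.Dual O L => f p.1) hφ₀
    simpa using this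
  have hAsw : A y₀ p.1 = A p.1 y₀ := hAsymm y₀ p.1
  rw [hQLadd, hφ₂add, hφ₁p, hAsw, hc₁]
  ring

end Paper2
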